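/- Let q1, q2 be quadratic forms on ℚ^4 such that: (i) for every prime p there exists a nonzero vector v ∈ ℚ_p^4 with q1(v) = q2(v) = 0 (after base change to ℚ_p), (ii) there exists a nonzero vector v ∈ ℝ^4 with q1(v) = q2(v) = 0 (after base change to ℝ), and (iii) there is no nonzero vector v ∈ ℚ^4 with q1(v) = q2(v) = 0. Define Q1, Q2 on coordinates x1,…,x10 by Q1 = q1(x1,…,x4) + x5·x6 + x8·x9 and Q2 = q2(x1,…,x4) + x5·x7 + x8·x10. Then for every prime p there is a 5-dimensional ℚ_p-linear subspace of ℚ_p^10 on which Q1 and Q2 both vanish identically, and there is a 5-dimensional ℝ-linear subspace of ℝ^10 on which Q1 and Q2 both vanish identically, but there is no 5-dimensional ℚ-linear subspace of ℚ^10 on which Q1 and Q2 both vanish identically. (Hence the local-global principle for 5-dimensional vanishing subspaces can fail when no member of the pencil is nonsingular.) -/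

import Mathlib

/-- The base change of a quadratic form on `K^m` along a field homomorphism `σ : K →+* L`,
obtained by applying `σ` entrywise to the Gram matrix of the form. -/
noncomputable def QuadraticForm.mapBase {K L : Type*} [Field K] [Field L] [Invertible (2 : K)]
    {m : ℕ} (σ : K →+* L) (q : QuadraticForm K (Fin m → K)) :
    QuadraticForm L (Fin m → L) :=
  ((QuadraticMap.toMatrix' q).map σ).toQuadraticMap'

/-- Given a quadratic form `q1` on `F^4`, the quadratic form
`Q1(x1,…,x10) = q1(x1,x2,x3,x4) + x5·x6 + x8·x9` on `F^10` (indices are 0-based below). -/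
noncomputable def amerFormFst10 {F : Type*} [Field F] (q1 : QuadraticForm F (Fin 4 → F)) :
    QuadraticForm F (Fin 10 → F) :=
  q1.comp (LinearMap.funLeft F F (Fin.castLE (by omega))) +
    QuadraticMap.proj (R := F) (A := F) (4 : Fin 10) 5 +
    QuadraticMap.proj (R := F) (A := F) (7 : Fin 10) 8

/-- Given a quadratic form `q2` on `F^4`, the quadratic form
`Q2(x1,…,x10) = q2(x1,x2,x3,x4) + x5·x7 + x8·x10` on `F^10` (indices are 0-based below). -/
noncomputable def amerFormSnd10 {F : Type*} [Field F] (q2 : QuadraticForm F (Fin 4 → F)) :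
    QuadraticForm F (Fin 10 → F) :=
  q2.comp (LinearMap.funLeft F F (Fin.castLE (by omega))) +
    QuadraticMap.proj (R := F) (A := F) (4 : Fin 10) 6 +
    QuadraticMap.proj (R := F) (A := F) (7 : Fin 10) 9

/-- The quadratic forms `f` and `g` both vanish identically on some `d`-dimensional
linear subspace of `L^m`. -/
def BothVanishOnSubspace {L : Type*} [Field L] {m : ℕ}
    (f g : QuadraticForm L (Fin m → L)) (d : ℕ) : Prop :=
  ∃ W : Submodule L (Fin m → L), Module.finrank L ↥W = d ∧ ∀ x ∈ W, f x = 0 ∧ g x = 0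

open QuadraticMap Matrix Module

namespace AmerAux

lemma h410 : (4:ℕ) ≤ 10 := by omega

variable {L : Type*} [Field L] {m : ℕ} (σ : ℚ →+* L)

lemma mapBase_add (q q' : QuadraticForm ℚ (Fin m → ℚ)) :
    QuadraticForm.mapBase σ (q + q') = QuadraticForm.mapBase σ q + QuadraticForm.mapBase σ q' := by
  unfold QuadraticForm.mapBase QuadraticForm.QuadraticMap.toMatrix' QuadraticForm.toMatrix' Matrix.toQuadraticMap' Matrix.toQuadraticForm'
  rw [map_add, map_add, Matrix.map_add _ (map_add σ), map_add]
  ext x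
  simp [LinearMap.BilinMap.toQuadraticMap_apply]

lemma toQuadraticMap'_conj {a b : ℕ} (M : Matrix (Fin a) (Fin a) L) (P : Matrix (Fin a) (Fin b) L) :
    (Pᵀ * M * P).toQuadraticMap' = M.toQuadraticMap'.comp (Matrix.toLin' P) := by
  ext x
  simp [Matrix.toQuadraticMap', Matrix.toQuadraticForm', LinearMap.BilinMap.toQuadraticMap_apply,
    ← Matrix.toLinearMap₂'_comp, QuadraticMap.comp_apply]

lemma funLeft_matrix_map (f : Fin 4 → Fin m) :
    (LinearMap.toMatrix' (LinearMap.funLeft ℚ ℚ f)).map σ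
      = LinearMap.toMatrix' (LinearMap.funLeft L L f) := by
  ext i j
  simp [LinearMap.toMatrix'_apply, LinearMap.funLeft_apply, Pi.single_apply, apply_ite]

lemma mapBase_comp (q : QuadraticForm ℚ (Fin 4 → ℚ)) (f : Fin 4 → Fin m) :
    QuadraticForm.mapBase σ (q.comp (LinearMap.funLeft ℚ ℚ f))
      = (QuadraticForm.mapBase σ q).comp (LinearMap.funLeft L L f) := by
  unfold QuadraticForm.mapBase QuadraticForm.QuadraticMap.toMatrix'
  rw [QuadraticForm.toMatrix'_comp, Matrix.map_mul, Matrix.map_mul]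
  have ht : (LinearMap.toMatrix' (LinearMap.funLeft ℚ ℚ f))ᵀ.map ⇑σ
      = ((LinearMap.toMatrix' (LinearMap.funLeft ℚ ℚ f)).map ⇑σ)ᵀ := by
    rw [Matrix.transpose_map]
  rw [ht, funLeft_matrix_map, toQuadraticMap'_conj, Matrix.toLin'_toMatrix']

lemma proj_entry (i j a b : Fin m) (hij : i ≠ j) :
    QuadraticForm.QuadraticMap.toMatrix' (QuadraticMap.proj (R:=ℚ) (A:=ℚ) i j) a b
      = if (a = i ∧ b = j) ∨ (a = j ∧ b = i) then (2:ℚ)⁻¹ else 0 := by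
  rw [QuadraticForm.QuadraticMap.toMatrix', QuadraticForm.toMatrix', LinearMap.toMatrix₂'_apply, associated_apply]
  simp only [proj_apply, Pi.add_apply, Pi.single_apply]
  split_ifs <;> simp_all [eq_comm]

lemma mapBase_proj_apply (i j : Fin m) (hij : i ≠ j) (v : Fin m → L) :
    QuadraticForm.mapBase σ (QuadraticMap.proj (R:=ℚ) (A:=ℚ) i j) v = v i * v j := by
  rw [QuadraticForm.mapBase, Matrix.toQuadraticMap', Matrix.toQuadraticForm', LinearMap.BilinMap.toQuadraticMap_apply,
    Matrix.toLinearMap₂'_apply]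
  simp_rw [Matrix.map_apply, proj_entry i j _ _ hij, apply_ite, map_zero]
  have key : ∀ (a b : Fin m),
      (if (a = i ∧ b = j) ∨ (a = j ∧ b = i) then v a • v b • σ 2⁻¹ else v a • v b • (0:L))
      = (if b = j then (if a = i then v a • v b • σ 2⁻¹ else 0) else 0)
        + (if b = i then (if a = j then v a • v b • σ 2⁻¹ else 0) else 0) := by
    intro a b
    split_ifs <;> simp_all [eq_comm]
  simp_rw [key, Finset.sum_add_distrib, Finset.sum_ite_eq', Finset.mem_univ, if_true]
  have h2 : (σ 2⁻¹ : L) + σ 2⁻¹ = 1 := by rw [← map_add]; norm_num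
  simp only [smul_eq_mul, Finset.sum_ite_eq', Finset.mem_univ, if_true]
  linear_combination (v i * v j) * h2

lemma amer_fst_apply {F : Type*} [Field F] (q : QuadraticForm F (Fin 4 → F)) (x : Fin 10 → F) :
    amerFormFst10 q x = q (x ∘ Fin.castLE h410) + x 4 * x 5 + x 7 * x 8 := by
  simp [amerFormFst10, QuadraticMap.add_apply, QuadraticMap.comp_apply,
    LinearMap.funLeft_apply, proj_apply]
  rfl

lemma amer_snd_apply {F : Type*} [Field F] (q : QuadraticForm F (Fin 4 → F)) (x : Fin 10 → F) :
    amerFormSnd10 q x = q (x ∘ Fin.castLE h410) + x 4 * x 6 + x 7 * x 9 := by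
  simp [amerFormSnd10, QuadraticMap.add_apply, QuadraticMap.comp_apply,
    LinearMap.funLeft_apply, proj_apply]
  rfl

lemma mapBase_amer_fst_apply (q : QuadraticForm ℚ (Fin 4 → ℚ)) (v : Fin 10 → L) :
    QuadraticForm.mapBase σ (amerFormFst10 q) v
      = QuadraticForm.mapBase σ q (v ∘ Fin.castLE h410) + v 4 * v 5 + v 7 * v 8 := by
  unfold amerFormFst10
  rw [mapBase_add, mapBase_add, QuadraticMap.add_apply, QuadraticMap.add_apply,
    mapBase_comp, mapBase_proj_apply σ _ _ (by decide), mapBase_proj_apply σ _ _ (by decide),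
    QuadraticMap.comp_apply]
  rfl

lemma mapBase_amer_snd_apply (q : QuadraticForm ℚ (Fin 4 → ℚ)) (v : Fin 10 → L) :
    QuadraticForm.mapBase σ (amerFormSnd10 q) v
      = QuadraticForm.mapBase σ q (v ∘ Fin.castLE h410) + v 4 * v 6 + v 7 * v 9 := by
  unfold amerFormSnd10
  rw [mapBase_add, mapBase_add, QuadraticMap.add_apply, QuadraticMap.add_apply,
    mapBase_comp, mapBase_proj_apply σ _ _ (by decide), mapBase_proj_apply σ _ _ (by decide),
    QuadraticMap.comp_apply]
  rfl

lemma pos_construction (q1 q2 : QuadraticForm ℚ (Fin 4 → ℚ)) (v : Fin 4 → L)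
    (hv : v ≠ 0) (h1 : QuadraticForm.mapBase σ q1 v = 0)
    (h2 : QuadraticForm.mapBase σ q2 v = 0) :
    BothVanishOnSubspace (QuadraticForm.mapBase σ (amerFormFst10 q1))
      (QuadraticForm.mapBase σ (amerFormSnd10 q2)) 5 := by
  classical
  obtain ⟨i0, hi0⟩ := Function.ne_iff.mp hv
  set u0 : Fin 10 → L := fun i => if h : (i : ℕ) < 4 then v ⟨i, h⟩ else 0 with hu0
  set b : Fin 5 → (Fin 10 → L) :=
    ![u0, Pi.single 5 1, Pi.single 6 1, Pi.single 8 1, Pi.single 9 1] with hb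
  have hcoord : ∀ (c : Fin 5 → L) (j : Fin 10),
      (∑ k, c k • b k) j = c 0 * u0 j + c 1 * (Pi.single (5 : Fin 10) (1:L) : Fin 10 → L) j
        + c 2 * (Pi.single (6 : Fin 10) (1:L) : Fin 10 → L) j
        + c 3 * (Pi.single (8 : Fin 10) (1:L) : Fin 10 → L) j
        + c 4 * (Pi.single (9 : Fin 10) (1:L) : Fin 10 → L) j := by
    intro c j
    simp [Fin.sum_univ_five, hb]
  have hu04 : u0 (4 : Fin 10) = 0 := dif_neg (by decide)
  have hu07 : u0 (7 : Fin 10) = 0 := dif_neg (by decide)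
  have hx4 : ∀ c : Fin 5 → L, (∑ k, c k • b k) 4 = 0 := by
    intro c
    rw [hcoord, hu04]
    simp [Pi.single_apply]
  have hx7 : ∀ c : Fin 5 → L, (∑ k, c k • b k) 7 = 0 := by
    intro c
    rw [hcoord, hu07]
    simp [Pi.single_apply]
  have hcomp : ∀ c : Fin 5 → L, (∑ k, c k • b k) ∘ Fin.castLE h410 = c 0 • v := by
    intro c
    funext i
    have hne : ∀ j : Fin 10, 4 ≤ (j : ℕ) → Fin.castLE h410 i ≠ j := by
      intro j hj hcontr
      have := congrArg Fin.val hcontr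
      simp [Fin.coe_castLE] at this
      omega
    simp only [Function.comp_apply, hcoord, Pi.smul_apply, smul_eq_mul]
    rw [Pi.single_eq_of_ne (hne 5 (by decide)), Pi.single_eq_of_ne (hne 6 (by decide)),
      Pi.single_eq_of_ne (hne 8 (by decide)), Pi.single_eq_of_ne (hne 9 (by decide))]
    have hu : u0 (Fin.castLE h410 i) = v i := by
      rw [hu0]
      simp [Fin.coe_castLE]
    rw [hu]
    ring
  have hli : LinearIndependent L b := by
    rw [Fintype.linearIndependent_iff]
    intro c hc
    have hc0 : c 0 = 0 := by
      have := congrFun hc ⟨(i0 : ℕ), by omega⟩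
      rw [hcoord] at this
      simp only [Pi.zero_apply] at this
      have hne : ∀ j : Fin 10, 4 ≤ (j:ℕ) → (⟨(i0:ℕ), by omega⟩ : Fin 10) ≠ j := by
        intro j hj hcontr
        have := congrArg Fin.val hcontr
        simp at this
        omega
      rw [Pi.single_eq_of_ne (hne 5 (by decide)),
        Pi.single_eq_of_ne (hne 6 (by decide)),
        Pi.single_eq_of_ne (hne 8 (by decide)),
        Pi.single_eq_of_ne (hne 9 (by decide))] at this
      have hu : u0 (⟨(i0:ℕ), by omega⟩ : Fin 10) = v i0 := by
        rw [hu0]; simp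
      rw [hu] at this
      simp at this
      have hi0' : v i0 ≠ 0 := hi0
      tauto
    have hval : ∀ (n : ℕ) (hn : n < 10), 4 ≤ n → (∑ k, c k • b k) ⟨n, hn⟩ = 0 :=
      fun n hn _ => congrFun hc ⟨n, hn⟩
    have h5 := hval 5 (by norm_num) (by norm_num)
    have h6 := hval 6 (by norm_num) (by norm_num)
    have h8 := hval 8 (by norm_num) (by norm_num)
    have h9 := hval 9 (by norm_num) (by norm_num)
    rw [hcoord] at h5 h6 h8 h9
    simp [hu0, Pi.single_apply, hc0] at h5 h6 h8 h9
    intro k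
    fin_cases k <;> simp_all
  refine ⟨Submodule.span L (Set.range b), ?_, ?_⟩
  · rw [finrank_span_eq_card hli]
    simp
  · intro x hx
    obtain ⟨c, rfl⟩ := (Submodule.mem_span_range_iff_exists_fun L).mp hx
    constructor
    · rw [mapBase_amer_fst_apply, hx4, hx7, hcomp, QuadraticMap.map_smul, h1]
      simp
    · rw [mapBase_amer_snd_apply, hx4, hx7, hcomp, QuadraticMap.map_smul, h2]
      simp

set_option synthInstance.maxHeartbeats 1000000 in
set_option maxHeartbeats 1000000 in
theorem no_global (q1 q2 : QuadraticForm ℚ (Fin 4 → ℚ))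
    (hq : ¬ ∃ v : Fin 4 → ℚ, v ≠ 0 ∧ q1 v = 0 ∧ q2 v = 0) :
    ¬ BothVanishOnSubspace (amerFormFst10 q1) (amerFormSnd10 q2) 5 := by
  classical
  rintro ⟨W, hdim, hvan⟩
  -- Elements of W with 4th and 7th coordinate zero have vanishing first four coordinates.
  have hfirst : ∀ y ∈ W, y 4 = 0 → y 7 = 0 → (y ∘ Fin.castLE h410) = 0 := by
    intro y hy h4 h7
    by_contra hne
    refine hq ⟨_, hne, ?_, ?_⟩
    · have := (hvan y hy).1
      rw [amer_fst_apply, h4, h7] at this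
      linarith
    · have := (hvan y hy).2
      rw [amer_snd_apply, h4, h7] at this
      linarith
  -- bilinear relations
  have hrel : ∀ x ∈ W, ∀ y ∈ W, y 4 = 0 → y 7 = 0 →
      (x 4 * y 5 + x 7 * y 8 = 0 ∧ x 4 * y 6 + x 7 * y 9 = 0) := by
    intro x hx y hy h4 h7
    have hy0 := hfirst y hy h4 h7
    have hcomp : (x + y) ∘ Fin.castLE h410 = x ∘ Fin.castLE h410 := by
      funext i
      have := congrFun hy0 i
      simp only [Function.comp_apply, Pi.add_apply, Pi.zero_apply] at this ⊢
      rw [this, add_zero]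
    obtain ⟨e1, e2⟩ := hvan (x + y) (W.add_mem hx hy)
    obtain ⟨f1, f2⟩ := hvan x hx
    rw [amer_fst_apply, hcomp] at e1
    rw [amer_snd_apply, hcomp] at e2
    rw [amer_fst_apply] at f1
    rw [amer_snd_apply] at f2
    simp only [Pi.add_apply, h4, h7, add_zero] at e1 e2
    constructor
    · linear_combination e1 - f1
    · linear_combination e2 - f2
  by_cases hA : ∀ x ∈ W, x 4 = 0 ∧ x 7 = 0
  · -- all of W has x4 = x7 = 0, hence also first four coords vanish; W embeds in ℚ⁴
    let ρ : ↥W →ₗ[ℚ] (Fin 4 → ℚ) :=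
      { toFun := fun x k => (x : Fin 10 → ℚ) (![5, 6, 8, 9] k)
        map_add' := by intros; funext k; simp
        map_smul' := by intros; funext k; simp }
    have hinj : Function.Injective ρ := by
      rw [← LinearMap.ker_eq_bot, LinearMap.ker_eq_bot']
      intro x hx
      obtain ⟨h4, h7⟩ := hA x.1 x.2
      have h0 := hfirst x.1 x.2 h4 h7
      have h5 : (x : Fin 10 → ℚ) 5 = 0 := congrFun hx 0
      have h6 : (x : Fin 10 → ℚ) 6 = 0 := congrFun hx 1
      have h8 : (x : Fin 10 → ℚ) 8 = 0 := congrFun hx 2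
      have h9 : (x : Fin 10 → ℚ) 9 = 0 := congrFun hx 3
      have hc0 : (x : Fin 10 → ℚ) 0 = 0 := congrFun h0 0
      have hc1 : (x : Fin 10 → ℚ) 1 = 0 := congrFun h0 1
      have hc2 : (x : Fin 10 → ℚ) 2 = 0 := congrFun h0 2
      have hc3 : (x : Fin 10 → ℚ) 3 = 0 := congrFun h0 3
      apply Subtype.ext
      funext i
      fin_cases i <;> assumption
    have hle := LinearMap.finrank_le_finrank_of_injective hinj
    rw [hdim] at hle
    simp [Module.finrank_pi] at hle
  · push_neg at hA
    obtain ⟨x0, hx0W, hx0⟩ := hA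
    have hx047 : x0 4 ≠ 0 ∨ x0 7 ≠ 0 := by tauto
    have key : ∀ cd : Fin 2 → Fin 10,
        (∀ x ∈ W, x 4 = 0 → x 7 = 0 → x (cd 0) = 0 → x (cd 1) = 0 →
          x 5 = 0 ∧ x 6 = 0 ∧ x 8 = 0 ∧ x 9 = 0) → False := by
      intro cd hcd
      let ρ : ↥W →ₗ[ℚ] (Fin 4 → ℚ) :=
        { toFun := fun x k => (x : Fin 10 → ℚ) (![4, 7, cd 0, cd 1] k)
          map_add' := by intros; funext k; simp
          map_smul' := by intros; funext k; simp }
      have hinj : Function.Injective ρ := by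
        rw [← LinearMap.ker_eq_bot, LinearMap.ker_eq_bot']
        intro x hx
        have h4 : (x : Fin 10 → ℚ) 4 = 0 := congrFun hx 0
        have h7 : (x : Fin 10 → ℚ) 7 = 0 := congrFun hx 1
        have hd0 : (x : Fin 10 → ℚ) (cd 0) = 0 := congrFun hx 2
        have hd1 : (x : Fin 10 → ℚ) (cd 1) = 0 := congrFun hx 3
        obtain ⟨h5, h6, h8, h9⟩ := hcd x.1 x.2 h4 h7 hd0 hd1
        have h0 := hfirst x.1 x.2 h4 h7
        have hc0 : (x : Fin 10 → ℚ) 0 = 0 := congrFun h0 0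
        have hc1 : (x : Fin 10 → ℚ) 1 = 0 := congrFun h0 1
        have hc2 : (x : Fin 10 → ℚ) 2 = 0 := congrFun h0 2
        have hc3 : (x : Fin 10 → ℚ) 3 = 0 := congrFun h0 3
        apply Subtype.ext
        funext i
        fin_cases i <;> assumption
      have hle := LinearMap.finrank_le_finrank_of_injective hinj
      rw [hdim] at hle
      simp [Module.finrank_pi] at hle
    rcases hx047 with hx04 | hx07
    · refine key ![8, 9] ?_
      intro x hxW h4 h7 h8 h9
      obtain ⟨r1, r2⟩ := hrel x0 hx0W x hxW h4 h7
      rw [show (![8,9] : Fin 2 → Fin 10) 0 = 8 from rfl] at h8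
      rw [show (![8,9] : Fin 2 → Fin 10) 1 = 9 from rfl] at h9
      rw [h8, mul_zero, add_zero] at r1
      rw [h9, mul_zero, add_zero] at r2
      have h5 : x 5 = 0 := by
        rcases mul_eq_zero.mp r1 with h | h
        · exact absurd h hx04
        · exact h
      have h6 : x 6 = 0 := by
        rcases mul_eq_zero.mp r2 with h | h
        · exact absurd h hx04
        · exact h
      exact ⟨h5, h6, h8, h9⟩
    · refine key ![5, 6] ?_
      intro x hxW h4 h7 h5 h6
      obtain ⟨r1, r2⟩ := hrel x0 hx0W x hxW h4 h7
      rw [show (![5,6] : Fin 2 → Fin 10) 0 = 5 from rfl] at h5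
      rw [show (![5,6] : Fin 2 → Fin 10) 1 = 6 from rfl] at h6
      rw [h5, mul_zero, zero_add] at r1
      rw [h6, mul_zero, zero_add] at r2
      have h8 : x 8 = 0 := by
        rcases mul_eq_zero.mp r1 with h | h
        · exact absurd h hx07
        · exact h
      have h9 : x 9 = 0 := by
        rcases mul_eq_zero.mp r2 with h | h
        · exact absurd h hx07
        · exact h
      exact ⟨h5, h6, h8, h9⟩

end AmerAux

/-- If `q1`, `q2` are quadratic forms on `ℚ^4` with a common nontrivial zero over every
`ℚ_p` and over `ℝ`, but with no common nontrivial zero over `ℚ`, then the forms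
`Q1 = q1(x1,…,x4) + x5 x6 + x8 x9` and `Q2 = q2(x1,…,x4) + x5 x7 + x8 x10` on `10`
variables vanish on a common `5`-dimensional subspace over every `ℚ_p` and over `ℝ`, but
not over `ℚ`: the local-global principle fails for `5`-dimensional vanishing subspaces. -/
theorem amer_local_global_failure_ten (q1 q2 : QuadraticForm ℚ (Fin 4 → ℚ))
    (hp : ∀ (p : ℕ) [Fact p.Prime], ∃ v : Fin 4 → ℚ_[p], v ≠ 0 ∧
      (q1.mapBase (algebraMap ℚ ℚ_[p])) v = 0 ∧ (q2.mapBase (algebraMap ℚ ℚ_[p])) v = 0)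
    (hr : ∃ v : Fin 4 → ℝ, v ≠ 0 ∧
      (q1.mapBase (algebraMap ℚ ℝ)) v = 0 ∧ (q2.mapBase (algebraMap ℚ ℝ)) v = 0)
    (hq : ¬ ∃ v : Fin 4 → ℚ, v ≠ 0 ∧ q1 v = 0 ∧ q2 v = 0) :
    (∀ (p : ℕ) [Fact p.Prime],
      BothVanishOnSubspace ((amerFormFst10 q1).mapBase (algebraMap ℚ ℚ_[p]))
        ((amerFormSnd10 q2).mapBase (algebraMap ℚ ℚ_[p])) 5) ∧
    BothVanishOnSubspace ((amerFormFst10 q1).mapBase (algebraMap ℚ ℝ))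
      ((amerFormSnd10 q2).mapBase (algebraMap ℚ ℝ)) 5 ∧
    ¬ BothVanishOnSubspace (amerFormFst10 q1) (amerFormSnd10 q2) 5 := by
  refine ⟨?_, ?_, AmerAux.no_global q1 q2 hq⟩
  · intro p hp'
    obtain ⟨v, hv, h1, h2⟩ := hp p
    exact AmerAux.pos_construction (algebraMap ℚ ℚ_[p]) q1 q2 v hv h1 h2
  · obtain ⟨v, hv, h1, h2⟩ := hr
    exact AmerAux.pos_construction (algebraMap ℚ ℝ) q1 q2 v hv h1 h2
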